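/- For each k ≥ 1 let w_k = ((ln k)/k, 0, 1) ∈ ℝ³. Then d(w_k, K_exp) ≤ 1/k (witnessed by v_k = ((ln k)/k, 1/k, 1) ∈ K_exp), while the distance from w_k to the face F_{−∞} = {(x,0,z) : x ≤ 0, z ≥ 0} equals (ln k)/k. Hence the ratio d(w_k, F_{−∞}) / d(w_k, K_exp) tends to infinity, so no Lipschitz error bound holds between span F_{−∞} and K_exp near (0,0,1). -/
import Mathlib

set_option maxHeartbeats 1000000

open Real Filter Metric

def Kexp : Set (EuclideanSpace ℝ (Fin 3)) :=
  {v | (0 < v 1 ∧ v 1 * Real.exp (v 0 / v 1) ≤ v 2) ∨ (v 0 ≤ 0 ∧ 0 ≤ v 2 ∧ v 1 = 0)}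

def FnegInf : Set (EuclideanSpace ℝ (Fin 3)) := {v | v 0 ≤ 0 ∧ v 1 = 0 ∧ 0 ≤ v 2}

def spanFnegInf : Set (EuclideanSpace ℝ (Fin 3)) := {v | v 1 = 0}

private lemma dist3 (x y : EuclideanSpace ℝ (Fin 3)) :
    dist x y = Real.sqrt ((x 0 - y 0)^2 + (x 1 - y 1)^2 + (x 2 - y 2)^2) := by
  rw [EuclideanSpace.dist_eq, Fin.sum_univ_three]
  simp [Real.dist_eq, sq_abs]

private lemma coord_le_dist (x y : EuclideanSpace ℝ (Fin 3)) (i : Fin 3) :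
    |x i - y i| ≤ dist x y := by
  rw [EuclideanSpace.dist_eq, ← Real.sqrt_sq_eq_abs]
  apply Real.sqrt_le_sqrt
  have h := Finset.single_le_sum (f := fun j => dist (x j) (y j) ^ 2)
    (fun j _ => sq_nonneg _) (Finset.mem_univ i)
  simpa [Real.dist_eq, sq_abs] using h

private lemma le_infDist' {s : Set (EuclideanSpace ℝ (Fin 3))} (hs : s.Nonempty)
    {x : EuclideanSpace ℝ (Fin 3)} {b : ℝ} (h : ∀ z ∈ s, b ≤ dist x z) :
    b ≤ Metric.infDist x s := by
  by_contra hlt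
  push_neg at hlt
  obtain ⟨y, hy, hdy⟩ := (Metric.infDist_lt_iff hs).1 hlt
  exact absurd (h y hy) (not_le.2 hdy)

private lemma exp_sq_le (t : ℝ) (ht : 0 ≤ t) : t^2/4 ≤ Real.exp t := by
  have h1 : Real.exp t = Real.exp (t/2) * Real.exp (t/2) := by
    rw [← Real.exp_add]; ring_nf
  nlinarith [Real.add_one_le_exp (t/2), Real.exp_pos (t/2)]

theorem no_lipschitz_bound_FnegInf (w v : ℕ → EuclideanSpace ℝ (Fin 3))
    (hw : ∀ k : ℕ, w k 0 = Real.log (k : ℝ) / (k : ℝ) ∧ w k 1 = 0 ∧ w k 2 = 1)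
    (hv : ∀ k : ℕ, v k 0 = Real.log (k : ℝ) / (k : ℝ) ∧ v k 1 = 1 / (k : ℝ) ∧ v k 2 = 1)
    (p : EuclideanSpace ℝ (Fin 3)) (hp : p 0 = 0 ∧ p 1 = 0 ∧ p 2 = 1) :
    (∀ k : ℕ, 1 ≤ k → v k ∈ Kexp ∧ Metric.infDist (w k) Kexp ≤ 1 / (k : ℝ) ∧
      Metric.infDist (w k) FnegInf = Real.log (k : ℝ) / (k : ℝ)) ∧
    Filter.Tendsto (fun k : ℕ => Metric.infDist (w k) FnegInf / Metric.infDist (w k) Kexp)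
      Filter.atTop Filter.atTop ∧
    ¬∃ κ ε : ℝ, 0 < κ ∧ 0 < ε ∧ ∀ q : EuclideanSpace ℝ (Fin 3), dist q p ≤ ε →
      Metric.infDist q FnegInf ≤
        κ * max (Metric.infDist q spanFnegInf) (Metric.infDist q Kexp) := by
  obtain ⟨hp0, hp1, hp2⟩ := hp
  have hpF : p ∈ FnegInf := ⟨le_of_eq hp0, hp1, by rw [hp2]; norm_num⟩
  have hpK : p ∈ Kexp := Or.inr ⟨le_of_eq hp0, by rw [hp2]; norm_num, hp1⟩
  have hKne : Kexp.Nonempty := ⟨p, hpK⟩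
  have hFne : FnegInf.Nonempty := ⟨p, hpF⟩
  set a : ℕ → ℝ := fun k => Real.log k / k with ha
  -- Part 1
  have key : ∀ k : ℕ, 1 ≤ k → v k ∈ Kexp ∧ Metric.infDist (w k) Kexp ≤ 1/(k:ℝ) ∧
      Metric.infDist (w k) FnegInf = a k := by
    intro k hk
    obtain ⟨hw0, hw1, hw2⟩ := hw k
    obtain ⟨hv0, hv1, hv2⟩ := hv k
    have hk0 : (0:ℝ) < k := by exact_mod_cast hk
    have hkne : (k:ℝ) ≠ 0 := ne_of_gt hk0
    have ha0 : 0 ≤ a k := div_nonneg (Real.log_nonneg (by exact_mod_cast hk)) hk0.le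
    have hvK : v k ∈ Kexp := by
      left
      refine ⟨by rw [hv1]; positivity, ?_⟩
      rw [hv0, hv1, hv2]
      rw [show Real.log k / k / (1/(k:ℝ)) = Real.log k by field_simp]
      rw [Real.exp_log hk0]
      rw [one_div, inv_mul_cancel₀ hkne]
    have hdwv : dist (w k) (v k) = 1/(k:ℝ) := by
      rw [dist3, hw0, hv0, hw1, hv1, hw2, hv2]
      rw [show (Real.log k / k - Real.log k / k)^2 + ((0:ℝ) - 1/k)^2 + ((1:ℝ)-1)^2
        = (1/(k:ℝ))^2 by ring]
      rw [Real.sqrt_sq (by positivity)]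
    have hdwp : dist (w k) p = a k := by
      rw [dist3, hw0, hw1, hw2, hp0, hp1, hp2]
      rw [show (Real.log k / k - 0)^2 + ((0:ℝ) - 0)^2 + ((1:ℝ)-1)^2 = (a k)^2 by
        simp only [ha]; ring]
      exact Real.sqrt_sq ha0
    refine ⟨hvK, ?_, ?_⟩
    · calc Metric.infDist (w k) Kexp ≤ dist (w k) (v k) :=
            Metric.infDist_le_dist_of_mem hvK
        _ = 1/(k:ℝ) := hdwv
    · refine le_antisymm ?_ ?_
      · calc Metric.infDist (w k) FnegInf ≤ dist (w k) p :=
              Metric.infDist_le_dist_of_mem hpF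
          _ = a k := hdwp
      · apply le_infDist' hFne
        intro z hz
        obtain ⟨hz0, -, -⟩ := hz
        have h0 := coord_le_dist (w k) z 0
        rw [hw0] at h0
        have : a k ≤ |Real.log k / k - z 0| := by
          rw [abs_of_nonneg (by simp only [ha]; linarith)]
          simp only [ha]; linarith
        linarith
  -- quantitative lower bound
  have hlow : ∀ k : ℕ, 2 ≤ k → (a k)^2/32 ≤ Metric.infDist (w k) Kexp := by
    intro k hk
    obtain ⟨hw0, hw1, hw2⟩ := hw k
    have hk1 : (1:ℝ) < k := by exact_mod_cast hk
    have hk0 : (0:ℝ) < k := by linarith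
    have hla : 0 < Real.log k := Real.log_pos hk1
    have ha0 : 0 < a k := div_pos hla hk0
    have ha1 : a k < 1 := (div_lt_one hk0).2
      (lt_of_le_of_lt (Real.log_le_sub_one_of_pos hk0) (by linarith))
    have hr0 : 0 < (a k)^2/32 := by positivity
    have hra : (a k)^2/32 < a k / 2 := by nlinarith
    apply le_infDist' hKne
    intro z hz
    by_contra hlt
    push_neg at hlt
    have h0 := coord_le_dist (w k) z 0
    have h1 := coord_le_dist (w k) z 1
    have h2 := coord_le_dist (w k) z 2
    rw [hw0] at h0; rw [hw1] at h1; rw [hw2] at h2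
    rcases hz with h | h
    · obtain ⟨hz1, hz2⟩ := h
      have hz1r : z 1 < (a k)^2/32 := by
        have hh : |0 - z 1| < (a k)^2/32 := lt_of_le_of_lt h1 hlt
        rwa [abs_sub_comm, sub_zero, abs_of_pos hz1] at hh
      have hz0 : a k / 2 < z 0 := by
        have hh := abs_lt.1 (lt_of_le_of_lt h0 hlt)
        simp only [ha] at hh ⊢
        linarith [hra]
      have hz2' : z 2 < 1 + (a k)^2/32 := by
        have hh := abs_lt.1 (lt_of_le_of_lt h2 hlt)
        linarith
      have hexp : (a k/2 / z 1)^2/4 ≤ Real.exp (a k/2 / z 1) :=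
        exp_sq_le _ (by positivity)
      have hmono : Real.exp (a k/2 / z 1) ≤ Real.exp (z 0 / z 1) :=
        Real.exp_le_exp.2 (div_le_div_of_nonneg_right hz0.le hz1.le)
      have h3 : z 1 * ((a k/2 / z 1)^2/4) ≤ z 1 * Real.exp (z 0 / z 1) :=
        mul_le_mul_of_nonneg_left (hexp.trans hmono) hz1.le
      have h4 : z 1 * ((a k/2 / z 1)^2/4) = (a k)^2/(16 * z 1) := by
        field_simp; ring
      have h5 : 2 < (a k)^2/(16 * z 1) := by
        rw [lt_div_iff₀ (by positivity)]
        nlinarith [hz1r]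
      rw [h4] at h3
      nlinarith [hz2, hz2', ha1, ha0]
    · obtain ⟨hz0, -, -⟩ := h
      have hh : a k ≤ |Real.log k / k - z 0| := by
        rw [abs_of_nonneg (by simp only [ha]; linarith)]
        simp only [ha]; linarith
      have := lt_of_le_of_lt (hh.trans h0) hlt
      linarith [hra]
  have hlogN : Filter.Tendsto (fun k : ℕ => Real.log k) Filter.atTop Filter.atTop :=
    Real.tendsto_log_atTop.comp tendsto_natCast_atTop_atTop
  refine ⟨key, ?_, ?_⟩
  · -- Part 2
    apply tendsto_atTop_mono' Filter.atTop ?_ hlogN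
    filter_upwards [Filter.eventually_ge_atTop 2] with k hk
    have hk1 : (1:ℝ) < k := by exact_mod_cast hk
    have hk0 : (0:ℝ) < k := by linarith
    have hla : 0 < Real.log k := Real.log_pos hk1
    have ha0 : 0 < a k := div_pos hla hk0
    obtain ⟨-, hB, hF⟩ := key k (by omega)
    have hBpos : 0 < Metric.infDist (w k) Kexp :=
      lt_of_lt_of_le (by positivity) (hlow k hk)
    have heq : Real.log k = a k / (1/(k:ℝ)) := by
      simp only [ha]; field_simp
    rw [hF, heq]
    exact div_le_div_of_nonneg_left ha0.le hBpos hB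
  · -- Part 3
    rintro ⟨κ, ε, hκ, hε, H⟩
    have haten : Filter.Tendsto a Filter.atTop (nhds 0) :=
      (Real.isLittleO_log_id_atTop.tendsto_div_nhds_zero).comp tendsto_natCast_atTop_atTop
    have h1 : ∀ᶠ k : ℕ in Filter.atTop, a k ≤ ε :=
      haten.eventually_le_const hε
    have h2 : ∀ᶠ k : ℕ in Filter.atTop, κ < Real.log k :=
      hlogN.eventually_gt_atTop κ
    obtain ⟨k, hk2, haε, hκlog⟩ :=
      ((Filter.eventually_ge_atTop 2).and (h1.and h2)).exists
    obtain ⟨hw0, hw1, hw2⟩ := hw k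
    have hk1 : (1:ℝ) < k := by exact_mod_cast hk2
    have hk0 : (0:ℝ) < k := by linarith
    have ha0 : 0 ≤ a k := le_of_lt (div_pos (Real.log_pos hk1) hk0)
    have hdwp : dist (w k) p = a k := by
      rw [dist3, hw0, hw1, hw2, hp0, hp1, hp2]
      rw [show (Real.log k / k - 0)^2 + ((0:ℝ) - 0)^2 + ((1:ℝ)-1)^2 = (a k)^2 by
        simp only [ha]; ring]
      exact Real.sqrt_sq ha0
    obtain ⟨-, hB, hF⟩ := key k (by omega)
    have hspan : Metric.infDist (w k) spanFnegInf = 0 :=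
      Metric.infDist_zero_of_mem hw1
    have hHk := H (w k) (by rw [hdwp]; exact haε)
    rw [hF, hspan, max_eq_right Metric.infDist_nonneg] at hHk
    have hchain : a k ≤ κ * (1/(k:ℝ)) :=
      hHk.trans (mul_le_mul_of_nonneg_left hB hκ.le)
    have : Real.log k ≤ κ := by
      have h6 : a k * k ≤ κ * (1/(k:ℝ)) * k :=
        mul_le_mul_of_nonneg_right hchain hk0.le
      simp only [ha] at h6
      rw [div_mul_cancel₀ _ (ne_of_gt hk0)] at h6
      calc Real.log k ≤ κ * (1/(k:ℝ)) * k := h6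
        _ = κ := by field_simp
    linarith
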